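/- Let T > 0, let u : ℝ^N × (0,T) → ℝ be continuous, let (εₖ) be a sequence of positive numbers tending to 0, and let uₖ : ℝ^N × (0,T) → ℝ be continuous functions converging locally uniformly to u. For each k let χₖ : ℝ^N × (0,T) → [0,1] be measurable and satisfy χₖ(x,t) = 1 whenever uₖ(x,t) ≥ 0 and χₖ(x,t) = 0 whenever uₖ(x,t) ≤ −εₖ. Assume χₖ converges weakly-* to a measurable function χ : ℝ^N × (0,T) → [0,1], in the sense that ∫₀^T ∫_{ℝ^N} φ χₖ dx dt → ∫₀^T ∫_{ℝ^N} φ χ dx dt for every integrable φ : ℝ^N × (0,T) → ℝ. Then 𝟙_{{u(·,t) > 0}}(x) ≤ χ(x,t) ≤ 𝟙_{{u(·,t) ≥ 0}}(x) for almost every (x,t) ∈ ℝ^N × (0,T). -/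

import Mathlib

open MeasureTheory Set Filter Topology

/-- If continuous `uₖ → u` locally uniformly on `ℝ^N × (0,T)`, `εₖ > 0`
tends to `0`, the measurable functions `χₖ : ℝ^N × (0,T) → [0,1]` satisfy `χₖ = 1`
where `uₖ ≥ 0` and `χₖ = 0` where `uₖ ≤ −εₖ`, and `χₖ ⇀ χ` weakly-* (tested against
all integrable `φ`), then `𝟙_{{u > 0}} ≤ χ ≤ 𝟙_{{u ≥ 0}}` almost everywhere. -/
theorem stmt_2 (N : ℕ) (hN : 1 ≤ N) (T : ℝ) (hT : 0 < T)
    (u : EuclideanSpace ℝ (Fin N) × ℝ → ℝ)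
    (uk : ℕ → EuclideanSpace ℝ (Fin N) × ℝ → ℝ)
    (ε : ℕ → ℝ)
    (χk : ℕ → EuclideanSpace ℝ (Fin N) × ℝ → ℝ)
    (χ : EuclideanSpace ℝ (Fin N) × ℝ → ℝ)
    (S : Set (EuclideanSpace ℝ (Fin N) × ℝ))
    (hS : S = {p | p.2 ∈ Ioo 0 T})
    (hu : ContinuousOn u S)
    (huk : ∀ k, ContinuousOn (uk k) S)
    (hε : ∀ k, 0 < ε k)
    (hε0 : Tendsto ε atTop (𝓝 0))
    (hloc : TendstoLocallyUniformlyOn uk u atTop S)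
    (hχkmeas : ∀ k, Measurable (χk k))
    (hχk01 : ∀ k p, 0 ≤ χk k p ∧ χk k p ≤ 1)
    (hχk1 : ∀ k, ∀ p ∈ S, 0 ≤ uk k p → χk k p = 1)
    (hχk0 : ∀ k, ∀ p ∈ S, uk k p ≤ -ε k → χk k p = 0)
    (hχmeas : Measurable χ)
    (hχ01 : ∀ p, 0 ≤ χ p ∧ χ p ≤ 1)
    (hweak : ∀ φ : EuclideanSpace ℝ (Fin N) × ℝ → ℝ,
      Integrable φ (volume.restrict S) →
      Tendsto (fun k => ∫ p in S, φ p * χk k p) atTop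
        (𝓝 (∫ p in S, φ p * χ p))) :
    ∀ᵐ p ∂(volume.restrict S),
      Set.indicator {q | 0 < u q} (fun _ => (1 : ℝ)) p ≤ χ p ∧
      χ p ≤ Set.indicator {q | 0 ≤ u q} (fun _ => (1 : ℝ)) p := by
  have hSopen : IsOpen S := by
    rw [hS]; exact isOpen_Ioo.preimage continuous_snd
  have hSmeas : MeasurableSet S := hSopen.measurableSet
  -- Key: on a finite-measure measurable A ⊆ S where χk → c pointwise eventually,
  -- the integral of χ over A equals c * vol A.
  have key : ∀ (A : Set (EuclideanSpace ℝ (Fin N) × ℝ)) (c : ℝ), MeasurableSet A → A ⊆ S →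
      volume A < ⊤ → (∀ p ∈ A, ∀ᶠ k in atTop, χk k p = c) →
      ∫ p in A, χ p = (volume A).toReal * c := by
    intro A c hA hAS hAfin hAc
    have hrfin : volume.restrict A Set.univ < ⊤ := by
      rw [Measure.restrict_apply_univ]; exact hAfin
    have hφint : Integrable (A.indicator (fun _ => (1 : ℝ))) (volume.restrict S) := by
      rw [integrable_indicator_iff hA]
      refine integrableOn_const (ne_of_lt ?_)
      exact (Measure.restrict_apply_le S A).trans_lt hAfin
    have hind : ∀ g : EuclideanSpace ℝ (Fin N) × ℝ → ℝ,
        (∫ p in S, A.indicator (fun _ => (1 : ℝ)) p * g p) = ∫ p in A, g p := by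
      intro g
      have : (fun p => A.indicator (fun _ => (1 : ℝ)) p * g p) = A.indicator g := by
        funext p
        by_cases hp : p ∈ A <;>
          simp [Set.indicator_of_mem, Set.indicator_of_notMem, hp]
      rw [this, setIntegral_indicator hA, inter_eq_self_of_subset_right hAS]
    have hlim1 : Tendsto (fun k => ∫ p in A, χk k p) atTop (𝓝 (∫ p in A, χ p)) := by
      have h := hweak _ hφint
      rw [hind] at h
      exact h.congr (fun k => hind (χk k))
    have hlim2 : Tendsto (fun k => ∫ p in A, χk k p) atTop (𝓝 ((volume A).toReal * c)) := by
      have h : Tendsto (fun k => ∫ p in A, χk k p) atTop (𝓝 (∫ _ in A, c)) := by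
        refine tendsto_integral_of_dominated_convergence (fun _ => (1 : ℝ))
          (fun k => (hχkmeas k).aestronglyMeasurable) ?_ ?_ ?_
        · exact integrableOn_const hAfin.ne
        · intro k
          filter_upwards with p
          rw [Real.norm_eq_abs, abs_le]
          exact ⟨by linarith [(hχk01 k p).1], (hχk01 k p).2⟩
        · filter_upwards [ae_restrict_mem hA] with p hp
          refine Tendsto.congr' ?_ tendsto_const_nhds
          filter_upwards [hAc p hp] with k hk using hk.symm
      rwa [setIntegral_const, smul_eq_mul] at h
    exact tendsto_nhds_unique hlim1 hlim2
  -- χ is integrable on finite measure subsets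
  have hχint : ∀ A : Set (EuclideanSpace ℝ (Fin N) × ℝ), volume A < ⊤ →
      IntegrableOn χ A volume := by
    intro A hAfin
    refine Integrable.mono'
      ((integrableOn_const hAfin.ne) : IntegrableOn (fun _ => (1 : ℝ)) A volume)
      hχmeas.aestronglyMeasurable ?_
    filter_upwards with p
    rw [Real.norm_eq_abs, abs_le]
    exact ⟨by linarith [(hχ01 p).1], (hχ01 p).2⟩
  -- The positive and negative open sets
  have hPopen : IsOpen (S ∩ u ⁻¹' Ioi 0) := hu.isOpen_inter_preimage hSopen isOpen_Ioi
  have hQopen : IsOpen (S ∩ u ⁻¹' Iio 0) := hu.isOpen_inter_preimage hSopen isOpen_Iio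
  have hballfin : ∀ n : ℕ,
      volume (Metric.closedBall (0 : EuclideanSpace ℝ (Fin N) × ℝ) n) < ⊤ :=
    fun n => (isCompact_closedBall _ _).measure_lt_top
  have hcover : ∀ B C : Set (EuclideanSpace ℝ (Fin N) × ℝ),
      B ∩ C ⊆ ⋃ n : ℕ, (B ∩ Metric.closedBall 0 n) ∩ C := by
    intro B C p hp
    refine mem_iUnion.2 ⟨⌈‖p‖⌉₊, ⟨hp.1, ?_⟩, hp.2⟩
    rw [Metric.mem_closedBall, dist_zero_right]
    exact Nat.le_ceil _
  -- χ = 1 a.e. on S ∩ {u > 0}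
  have hbad1 : volume ((S ∩ u ⁻¹' Ioi 0) ∩ {p | χ p ≠ 1}) = 0 := by
    refine measure_mono_null (hcover _ _) (measure_iUnion_null fun n => ?_)
    set A := (S ∩ u ⁻¹' Ioi 0) ∩ Metric.closedBall 0 n with hAdef
    have hA : MeasurableSet A := hPopen.measurableSet.inter Metric.isClosed_closedBall.measurableSet
    have hAS : A ⊆ S := fun p hp => hp.1.1
    have hAfin : volume A < ⊤ := (measure_mono (inter_subset_right)).trans_lt (hballfin n)
    have hint := key A 1 hA hAS hAfin ?_
    · have hone : IntegrableOn (fun _ => (1 : ℝ)) A volume :=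
        integrableOn_const hAfin.ne
      have hzero : (∫ p in A, (1 - χ p)) = 0 := by
        rw [integral_sub hone (hχint A hAfin), hint, setIntegral_const, smul_eq_mul]
        simp [Measure.real]
      have hae := (integral_eq_zero_iff_of_nonneg
        (fun p => sub_nonneg.2 (hχ01 p).2) ((hone).sub (hχint A hAfin))).1 hzero
      rw [EventuallyEq, ae_restrict_iff' hA] at hae
      have h0 := ae_iff.1 hae
      refine measure_mono_null ?_ h0
      intro p hp
      simp only [mem_setOf_eq, Pi.zero_apply, not_forall]
      exact ⟨hp.1, by intro h; exact hp.2 (by linarith [sub_eq_zero.1 h])⟩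
    · intro p hp
      have hpS : p ∈ S := hp.1.1
      have hpu : (0 : ℝ) < u p := hp.1.2
      have ht : Tendsto (fun k => uk k p) atTop (𝓝 (u p)) := hloc.tendsto_at hpS
      filter_upwards [ht.eventually (eventually_gt_nhds hpu)] with k hk
      exact hχk1 k p hpS hk.le
  -- χ = 0 a.e. on S ∩ {u < 0}
  have hbad0 : volume ((S ∩ u ⁻¹' Iio 0) ∩ {p | χ p ≠ 0}) = 0 := by
    refine measure_mono_null (hcover _ _) (measure_iUnion_null fun n => ?_)
    set A := (S ∩ u ⁻¹' Iio 0) ∩ Metric.closedBall 0 n with hAdef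
    have hA : MeasurableSet A := hQopen.measurableSet.inter Metric.isClosed_closedBall.measurableSet
    have hAS : A ⊆ S := fun p hp => hp.1.1
    have hAfin : volume A < ⊤ := (measure_mono (inter_subset_right)).trans_lt (hballfin n)
    have hint := key A 0 hA hAS hAfin ?_
    · rw [mul_zero] at hint
      have hae := (integral_eq_zero_iff_of_nonneg
        (fun p => (hχ01 p).1) (hχint A hAfin)).1 hint
      rw [EventuallyEq, ae_restrict_iff' hA] at hae
      have h0 := ae_iff.1 hae
      refine measure_mono_null ?_ h0
      intro p hp
      simp only [mem_setOf_eq, Pi.zero_apply, not_forall]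
      exact ⟨hp.1, hp.2⟩
    · intro p hp
      have hpS : p ∈ S := hp.1.1
      have hpu : u p < 0 := hp.1.2
      have ht : Tendsto (fun k => uk k p) atTop (𝓝 (u p)) := hloc.tendsto_at hpS
      filter_upwards [ht.eventually (eventually_lt_nhds (show u p < u p / 2 by linarith)),
        hε0.eventually (eventually_lt_nhds (show (0 : ℝ) < -(u p) / 2 by linarith))]
        with k hk1 hk2
      exact hχk0 k p hpS (by linarith)
  -- Conclusion
  have hb1 : ∀ᵐ p ∂volume.restrict S, p ∉ (S ∩ u ⁻¹' Ioi 0) ∩ {p | χ p ≠ 1} :=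
    measure_eq_zero_iff_ae_notMem.1 (le_antisymm
      ((Measure.restrict_apply_le S _).trans hbad1.le) zero_le)
  have hb0 : ∀ᵐ p ∂volume.restrict S, p ∉ (S ∩ u ⁻¹' Iio 0) ∩ {p | χ p ≠ 0} :=
    measure_eq_zero_iff_ae_notMem.1 (le_antisymm
      ((Measure.restrict_apply_le S _).trans hbad0.le) zero_le)
  filter_upwards [hb1, hb0, ae_restrict_mem hSmeas] with p hp1 hp0 hpS
  rcases lt_trichotomy (u p) 0 with h | h | h
  · have hχ0 : χ p = 0 := by
      by_contra hne
      exact hp0 ⟨⟨hpS, h⟩, hne⟩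
    constructor
    · rw [Set.indicator_of_notMem (by simp only [mem_setOf_eq, not_lt]; linarith), hχ0]
    · rw [hχ0]
      exact Set.indicator_nonneg (fun _ _ => zero_le_one) p
  · constructor
    · calc Set.indicator {q | 0 < u q} (fun _ => (1 : ℝ)) p = 0 := by
            rw [Set.indicator_of_notMem (by simp [mem_setOf_eq, h])]
        _ ≤ χ p := (hχ01 p).1
    · rw [Set.indicator_of_mem (by simp [mem_setOf_eq, h.symm.le])]
      exact (hχ01 p).2
  · have hχ1 : χ p = 1 := by
      by_contra hne
      exact hp1 ⟨⟨hpS, h⟩, hne⟩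
    constructor
    · rw [hχ1]
      by_cases hm : p ∈ {q | 0 < u q}
      · rw [Set.indicator_of_mem hm]
      · rw [Set.indicator_of_notMem hm]; exact zero_le_one
    · rw [hχ1, Set.indicator_of_mem (by simp [mem_setOf_eq, h.le])]
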